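/- With the Schur algorithm data (φ_n, ψ_n, a_n, ρ_n, 𝓔_n^j), the identity ψ_n/(ψ_j (1 + 𝓔_n^j φ_n)) = 𝓠_n^j holds on the disk; in particular this quotient is a polynomial of degree at most n - j - 1. -/

import Mathlib

open Complex ComplexConjugate Polynomial

/-- The column vectors `[𝓟_n^j; 𝓠_n^j]` of the ordered `2×2` matrix products
`∏^←_{k=j}^{n-1} (1/ρ_k) [[z, conj a_k], [a_k z, 1]]` applied to `[0; 1]`;
the argument `m` stands for `n - j`. -/
noncomputable def schurPQ (a : ℕ → ℂ) (j : ℕ) : ℕ → Polynomial ℂ × Polynomial ℂ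
  | 0 => (0, 1)
  | m + 1 =>
    let pq := schurPQ a j m
    let k := j + m
    (((Real.sqrt (1 - ‖a k‖ ^ 2) : ℝ) : ℂ)⁻¹ •
        (Polynomial.X * pq.1 + Polynomial.C (conj (a k)) * pq.2),
     ((Real.sqrt (1 - ‖a k‖ ^ 2) : ℝ) : ℂ)⁻¹ •
        (Polynomial.C (a k) * Polynomial.X * pq.1 + pq.2))

/-- The rational functions `𝓔_n^j = 𝓟_n^j / 𝓠_n^j`; the argument `m` stands for `n - j`. -/
noncomputable def schurE (a : ℕ → ℂ) (j m : ℕ) (z : ℂ) : ℂ :=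
  (schurPQ a j m).1.eval z / (schurPQ a j m).2.eval z

lemma key_ineq (c u q : ℂ) (hc : ‖c‖ < 1) (hu : ‖u‖ < ‖q‖) :
    ‖u + conj c * q‖ < ‖q + c * u‖ := by
  have hid : Complex.normSq (q + c*u) - Complex.normSq (u + conj c * q)
      = (1 - Complex.normSq c) * (Complex.normSq q - Complex.normSq u) := by
    simp only [Complex.normSq_apply, Complex.add_re, Complex.add_im, Complex.mul_re,
      Complex.mul_im, Complex.conj_re, Complex.conj_im]
    ring
  have hn : ∀ x : ℂ, Complex.normSq x = ‖x‖^2 := fun x => by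
    rw [Complex.sq_norm]
  have hc2 : Complex.normSq c < 1 := by
    rw [hn]; nlinarith [norm_nonneg c]
  have hu2 : Complex.normSq u < Complex.normSq q := by
    rw [hn, hn]; nlinarith [norm_nonneg u, norm_nonneg q]
  have h : Complex.normSq (u + conj c * q) < Complex.normSq (q + c*u) := by nlinarith
  have := Real.sqrt_lt_sqrt (Complex.normSq_nonneg _) h
  rwa [← Complex.norm_def, ← Complex.norm_def] at this

lemma schurPQ_bound (a : ℕ → ℂ) (ha : ∀ k, ‖a k‖ < 1) (j : ℕ) :
    ∀ m : ℕ, ∀ z : ℂ, ‖z‖ < 1 →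
      ‖(schurPQ a j m).1.eval z‖ < ‖(schurPQ a j m).2.eval z‖ := by
  intro m
  induction m with
  | zero => intro z hz; simp [schurPQ]
  | succ m ih =>
    intro z hz
    have IH := ih z hz
    set p := (schurPQ a j m).1.eval z
    set q := (schurPQ a j m).2.eval z
    set c := a (j + m)
    have hρ : (0:ℝ) < Real.sqrt (1 - ‖c‖ ^ 2) := by
      apply Real.sqrt_pos.mpr; nlinarith [ha (j+m), norm_nonneg c]
    have hev : (schurPQ a j (m+1)).1.eval z
        = ((Real.sqrt (1 - ‖c‖ ^ 2) : ℝ) : ℂ)⁻¹ * (z * p + conj c * q) ∧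
        (schurPQ a j (m+1)).2.eval z
        = ((Real.sqrt (1 - ‖c‖ ^ 2) : ℝ) : ℂ)⁻¹ * (c * z * p + q) := by
      constructor <;> · simp [schurPQ, p, q, c, smul_eq_mul, mul_assoc]; ring
    rw [hev.1, hev.2, norm_mul, norm_mul]
    have hzp : ‖z * p‖ < ‖q‖ := by
      rw [norm_mul]
      calc ‖z‖ * ‖p‖ ≤ 1 * ‖p‖ := by
            apply mul_le_mul_of_nonneg_right (le_of_lt hz) (norm_nonneg p)
        _ = ‖p‖ := one_mul _
        _ < ‖q‖ := IH
    have := key_ineq c (z * p) q (ha (j+m)) hzp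
    have h2 : ‖z * p + conj c * q‖ < ‖q + c * (z * p)‖ := this
    have hne : ((Real.sqrt (1 - ‖c‖ ^ 2) : ℝ) : ℂ) ≠ 0 := by
      exact_mod_cast hρ.ne'
    apply mul_lt_mul_of_pos_left _ (by rw [norm_pos_iff]; exact inv_ne_zero hne)
    calc ‖z * p + conj c * q‖ < ‖q + c * (z*p)‖ := h2
      _ = ‖c * z * p + q‖ := by ring_nf

lemma schurPQ_main (f ψ : ℕ → ℂ → ℂ)
    (hfb : ∀ n, ∀ z ∈ Metric.ball (0 : ℂ) 1, ‖f n z‖ ≤ 1)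
    (ha : ∀ n, ‖f n 0‖ < 1)
    (hrec : ∀ n, ∀ z ∈ Metric.ball (0 : ℂ) 1,
      f (n + 1) z * (z * (1 - conj (f n 0) * f n z)) = f n z - f n 0)
    (hψrec : ∀ n, ∀ z ∈ Metric.ball (0 : ℂ) 1,
      ψ (n + 1) z * (1 - conj (f n 0) * f n z) =
        ψ n z * ((Real.sqrt (1 - ‖f n 0‖ ^ 2) : ℝ) : ℂ)) (j : ℕ) :
    ∀ m : ℕ, ∀ z ∈ Metric.ball (0 : ℂ) 1,
      ψ (j + m) z = ψ j z *
        ((schurPQ (fun i => f i 0) j m).1.eval z * (z * f (j + m) z)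
          + (schurPQ (fun i => f i 0) j m).2.eval z) := by
  intro m
  induction m with
  | zero => intro z hz; simp [schurPQ]
  | succ m IHm =>
    intro z hz
    have IH := IHm z hz
    set n := j + m with hn
    set a := f n 0 with hadef
    set p := (schurPQ (fun i => f i 0) j m).1.eval z
    set q := (schurPQ (fun i => f i 0) j m).2.eval z
    set ρ : ℂ := ((Real.sqrt (1 - ‖a‖ ^ 2) : ℝ) : ℂ) with hρdef
    have hρpos : (0:ℝ) < Real.sqrt (1 - ‖a‖ ^ 2) := by
      apply Real.sqrt_pos.mpr; nlinarith [ha n, norm_nonneg a]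
    have hρ : ρ ≠ 0 := by rw [hρdef]; exact_mod_cast hρpos.ne'
    have hρ2 : ρ * ρ = 1 - conj a * a := by
      have h1 : conj a * a = ((‖a‖^2 : ℝ) : ℂ) := by
        rw [mul_comm, Complex.mul_conj, Complex.normSq_eq_norm_sq]
      rw [h1, hρdef, ← Complex.ofReal_mul,
        Real.mul_self_sqrt (by nlinarith [ha n, norm_nonneg a])]
      push_cast; ring
    have hD : (1 : ℂ) - conj a * f n z ≠ 0 := by
      intro h
      rw [sub_eq_zero] at h
      have : ‖conj a * f n z‖ < 1 := by
        rw [norm_mul, RCLike.norm_conj]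
        calc ‖a‖ * ‖f n z‖ ≤ ‖a‖ * 1 :=
              mul_le_mul_of_nonneg_left (hfb n z hz) (norm_nonneg a)
          _ < 1 := by simpa using ha n
      rw [← h] at this
      simp at this
    have key := hψrec n z hz
    have key2 := hrec n z hz
    simp only [← hadef] at key key2
    rw [← hρdef] at key
    have hev1 : (schurPQ (fun i => f i 0) j (m+1)).1.eval z
        = ρ⁻¹ * (z * p + conj a * q) := by
      simp [schurPQ, p, q, hρdef, hadef, hn, smul_eq_mul, mul_assoc]; ring
    have hev2 : (schurPQ (fun i => f i 0) j (m+1)).2.eval z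
        = ρ⁻¹ * (a * z * p + q) := by
      simp [schurPQ, p, q, hρdef, hadef, hn, smul_eq_mul, mul_assoc]; ring
    have hjm : j + (m+1) = n + 1 := by omega
    rw [hjm, hev1, hev2]
    apply mul_right_cancel₀ (mul_ne_zero hD hρ)
    have hinv : ρ⁻¹ * ρ = 1 := inv_mul_cancel₀ hρ
    linear_combination ρ * key + (ρ * ρ) * IH
      + (ψ j z * (p * (z * f n z) + q)) * hρ2
      - (ψ j z * (z * p + conj a * q)) * key2
      - (ψ j z * ((z * p + conj a * q) * (z * f (n+1) z) + (a * z * p + q)) *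
          (1 - conj a * f n z)) * hinv

theorem stmt13 (f ψ : ℕ → ℂ → ℂ)
    (hfa : ∀ n, DifferentiableOn ℂ (f n) (Metric.ball 0 1))
    (hfb : ∀ n, ∀ z ∈ Metric.ball (0 : ℂ) 1, ‖f n z‖ ≤ 1)
    (ha : ∀ n, ‖f n 0‖ < 1)
    (hrec : ∀ n, ∀ z ∈ Metric.ball (0 : ℂ) 1,
      f (n + 1) z * (z * (1 - conj (f n 0) * f n z)) = f n z - f n 0)
    (hψa : ∀ n, DifferentiableOn ℂ (ψ n) (Metric.ball 0 1))
    (hψ0 : ∀ n, (ψ n 0).im = 0 ∧ 0 < (ψ n 0).re)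
    (hψrec : ∀ n, ∀ z ∈ Metric.ball (0 : ℂ) 1,
      ψ (n + 1) z * (1 - conj (f n 0) * f n z) =
        ψ n z * ((Real.sqrt (1 - ‖f n 0‖ ^ 2) : ℝ) : ℂ)) :
    ∀ j m : ℕ, ∀ z ∈ Metric.ball (0 : ℂ) 1,
      ψ (j + m) z =
        ψ j z * (1 + schurE (fun i => f i 0) j m z * (z * f (j + m) z)) *
          ((schurPQ (fun i => f i 0) j m).2.eval z) := by
  intro j m z hz
  have hz' : ‖z‖ < 1 := by simpa [Metric.mem_ball] using hz
  have hb := schurPQ_bound (fun i => f i 0) (fun k => ha k) j m z hz'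
  set p := (schurPQ (fun i => f i 0) j m).1.eval z
  set q := (schurPQ (fun i => f i 0) j m).2.eval z
  have hq : q ≠ 0 := by
    intro h; rw [h] at hb; simp at hb
    exact absurd hb (not_lt.mpr (norm_nonneg p))
  have hE : schurE (fun i => f i 0) j m z = p / q := rfl
  have hmain := schurPQ_main f ψ hfb ha hrec hψrec j m z hz
  rw [hmain, hE, mul_assoc]
  congr 1
  have : (1 + p / q * (z * f (j + m) z)) * q = p * (z * f (j + m) z) + q := by
    field_simp
    ring
  rw [this]
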